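/- Let F_B, F_S : [0,1] → [0,1] be nondecreasing, let v ∈ [0,1], and define u_B(p) = (v − p)·F_B(p) and u_O(p) = (v − p)·F_B(p)·F_S(p) for p ∈ [0,1]. Assume: u_B has a unique maximizer p* over [0,1] with p* ∈ (0,1) and u_B(p*) > 0; F_B is differentiable at p*; F_S is differentiable at p* with F_S'(p*) > 0; and the set of maximizers of u_O over [0,1] is nonempty with greatest element p_O^max. Then p_O^max > p*. -/
import Mathlib


open Set

/-- **Strict upward shift of the optimal bid under max-shilling.**
If `u_B` has a unique maximizer `p* ∈ (0,1)` over `[0,1]` with `u_B(p*) > 0`,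
`F_B` is differentiable at `p*`, and `F_S` is differentiable at `p*` with positive
derivative, then the greatest maximizer of `u_O` over `[0,1]` satisfies
`p_O^max > p*`. -/
theorem single_optimum_under_shilling
    (FB FS : ℝ → ℝ) (v : ℝ)
    (hFBmono : MonotoneOn FB (Icc 0 1)) (hFSmono : MonotoneOn FS (Icc 0 1))
    (hFBrange : ∀ p ∈ Icc (0:ℝ) 1, FB p ∈ Icc (0:ℝ) 1)
    (hFSrange : ∀ p ∈ Icc (0:ℝ) 1, FS p ∈ Icc (0:ℝ) 1)
    (hv : v ∈ Icc (0:ℝ) 1)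
    (uB uO : ℝ → ℝ)
    (huB : ∀ p, uB p = (v - p) * FB p)
    (huO : ∀ p, uO p = (v - p) * FB p * FS p)
    (pstar : ℝ) (hpstar_mem : pstar ∈ Ioo (0:ℝ) 1)
    (hpstar_max : ∀ q ∈ Icc (0:ℝ) 1, uB q ≤ uB pstar)
    (hpstar_unique : ∀ p ∈ Icc (0:ℝ) 1, (∀ q ∈ Icc (0:ℝ) 1, uB q ≤ uB p) → p = pstar)
    (hupos : 0 < uB pstar)
    (fB fS : ℝ)
    (hfB : HasDerivAt FB fB pstar)
    (hfS : HasDerivAt FS fS pstar) (hfSpos : 0 < fS)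
    (pOmax : ℝ)
    (hpOmax : IsGreatest {p ∈ Icc (0:ℝ) 1 | ∀ q ∈ Icc (0:ℝ) 1, uO q ≤ uO p} pOmax) :
    pstar < pOmax := by
  obtain ⟨⟨hpO_mem, hpO_max⟩, -⟩ := hpOmax
  obtain ⟨hps0, hps1⟩ := hpstar_mem
  have hpsIcc : pstar ∈ Icc (0:ℝ) 1 := ⟨hps0.le, hps1.le⟩
  have huBeq : uB = fun p => (v - p) * FB p := funext huB
  have huOeq : uO = fun p => uB p * FS p := funext fun p => by
    rw [huO, huB]
  -- derivative of uB at pstar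
  have huBderiv : HasDerivAt uB ((0 - 1) * FB pstar + (v - pstar) * fB) pstar := by
    rw [huBeq]
    exact ((hasDerivAt_const pstar v).sub (hasDerivAt_id pstar)).mul hfB
  -- uB has local max at pstar, so derivative is zero
  have hloc : IsLocalMax uB pstar := by
    have hmem : Icc (0:ℝ) 1 ∈ nhds pstar := Icc_mem_nhds hps0 hps1
    exact Filter.eventually_of_mem hmem fun q hq => hpstar_max q hq
  have hzero : (0 - 1) * FB pstar + (v - pstar) * fB = 0 :=
    hloc.hasDerivAt_eq_zero huBderiv
  -- derivative of uO at pstar is uB pstar * fS > 0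
  have huOderiv : HasDerivAt uO (uB pstar * fS) pstar := by
    have h := huBderiv.mul hfS
    rw [hzero, zero_mul, zero_add] at h
    rw [huOeq]
    exact h
  have hdpos : 0 < uB pstar * fS := mul_pos hupos hfSpos
  -- find p ∈ (pstar, 1) with uO pstar < uO p
  have hslope := hasDerivAt_iff_tendsto_slope.mp huOderiv
  have hev : ∀ᶠ p in nhdsWithin pstar (Set.Ioi pstar), 0 < slope uO pstar p := by
    have h1 : ∀ᶠ p in nhdsWithin pstar ({pstar}ᶜ), 0 < slope uO pstar p :=
      hslope.eventually (eventually_gt_nhds hdpos)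
    exact h1.filter_mono (nhdsWithin_mono _ fun x hx => ne_of_gt hx)
  have hev2 : ∀ᶠ p in nhdsWithin pstar (Set.Ioi pstar), p ∈ Ioo pstar 1 :=
    Ioo_mem_nhdsGT_of_mem ⟨le_refl _, hps1⟩
  obtain ⟨p, hpslope, hpIoo⟩ := (hev.and hev2).exists
  have hpgt : pstar < p := hpIoo.1
  have hpIcc : p ∈ Icc (0:ℝ) 1 := ⟨(hps0.trans hpgt).le, hpIoo.2.le⟩
  have hO_lt : uO pstar < uO p := by
    rw [slope_def_field] at hpslope
    rcases div_pos_iff.mp hpslope with ⟨h1, _⟩ | ⟨_, h2⟩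
    · linarith
    · linarith [sub_pos.mpr hpgt]
  -- uO pOmax > uO pstar
  have hOmax_big : uO pstar < uO pOmax := lt_of_lt_of_le hO_lt (hpO_max p hpIcc)
  -- any q ≤ pstar has uO q ≤ uO pstar
  by_contra hle
  push_neg at hle
  have hFSq0 : 0 ≤ FS pOmax := (hFSrange pOmax hpO_mem).1
  have hFSs0 : 0 ≤ FS pstar := (hFSrange pstar hpsIcc).1
  have hkey : uO pOmax ≤ uO pstar := by
    rw [huOeq]
    by_cases hsgn : uB pOmax ≤ 0
    · calc uB pOmax * FS pOmax ≤ 0 := mul_nonpos_of_nonpos_of_nonneg hsgn hFSq0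
        _ ≤ uB pstar * FS pstar := mul_nonneg hupos.le hFSs0
    · push_neg at hsgn
      exact mul_le_mul (hpstar_max pOmax hpO_mem)
        (hFSmono hpO_mem hpsIcc hle) hFSq0 hupos.le
  linarith
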